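/- The space W of weighted homogeneous polynomials of weighted degree 6 in ℂ[x,y,z] (weights 1,1,2) has complex dimension 16, and for every (x₀,y₀,z₀) ∈ ℂ³ with (x₀,y₀) ≠ (0,0), the set of f ∈ W whose three partial derivatives ∂f/∂x, ∂f/∂y, ∂f/∂z all vanish at (x₀,y₀,z₀) is a complex linear subspace of W of dimension 13 (codimension 3). -/

import Mathlib

open MvPolynomial

noncomputable section

/-- The polynomial ring `ℂ[x, y, z]`, with variables indexed by `Fin 3`:
`x = X 0`, `y = X 1`, `z = X 2`. -/
abbrev P3 : Type := MvPolynomial (Fin 3) ℂ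

/-- The weights `wt(x) = wt(y) = 1`, `wt(z) = 2`. -/
def w112 : Fin 3 → ℕ := ![1, 1, 2]

/-- The space `W` of weighted homogeneous polynomials of weighted degree `6`. -/
def W6 : Submodule ℂ P3 := weightedHomogeneousSubmodule ℂ w112 6

/-- A form `f` is singular at the point of the cone `P(1,1,2)` with representative `p ∈ ℂ³`
if the three partial derivatives of `f` all vanish at `p`. -/
def SingAt (f : P3) (p : Fin 3 → ℂ) : Prop :=
  ∀ i : Fin 3, eval p (pderiv i f) = 0

/-! ### Auxiliary: dimension of `W6` -/

def Dexp : Set (Fin 3 →₀ ℕ) := { d | Finsupp.weight w112 d = 6 }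

lemma mem_Dexp {d : Fin 3 →₀ ℕ} : d ∈ Dexp ↔ d 0 + d 1 + 2 * d 2 = 6 := by
  simp [Dexp, Finsupp.weight_apply, Finsupp.sum_fintype, Fin.sum_univ_three, w112, mul_comm]

def T' : Type := {v : Fin 7 × Fin 7 × Fin 4 // (v.1 : ℕ) + (v.2.1 : ℕ) + 2 * (v.2.2 : ℕ) = 6}
instance : Fintype T' := by unfold T'; infer_instance

def eDT' : Dexp ≃ T' where
  toFun t := ⟨(⟨t.1 0, by have := mem_Dexp.1 t.2; omega⟩, ⟨t.1 1, by have := mem_Dexp.1 t.2; omega⟩,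
      ⟨t.1 2, by have := mem_Dexp.1 t.2; omega⟩), mem_Dexp.1 t.2⟩
  invFun v := ⟨Finsupp.equivFunOnFinite.symm ![(v.1.1 : ℕ), (v.1.2.1 : ℕ), (v.1.2.2 : ℕ)],
      mem_Dexp.2 (by simpa [Finsupp.equivFunOnFinite_symm_apply_apply] using v.2)⟩
  left_inv t := by
    apply Subtype.ext; ext i; fin_cases i <;> simp [Finsupp.equivFunOnFinite_symm_apply_apply]
  right_inv v := by
    apply Subtype.ext
    apply Prod.ext
    · apply Fin.ext; simp [Finsupp.equivFunOnFinite_symm_apply_apply]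
    apply Prod.ext <;> [skip; skip] <;> apply Fin.ext <;> simp [Finsupp.equivFunOnFinite_symm_apply_apply]

instance : Fintype Dexp := Fintype.ofEquiv T' eDT'.symm

lemma cardDexp : Fintype.card Dexp = 16 := by
  rw [Fintype.card_congr eDT']; decide

def eW6 : W6 ≃ₗ[ℂ] (Dexp → ℂ) :=
  ((LinearEquiv.ofEq _ _ (weightedHomogeneousSubmodule_eq_finsupp_supported ℂ w112 6)).trans
    (AddMonoidAlgebra.supportedEquivFinsupp Dexp)).trans (Finsupp.linearEquivFunOnFinite ℂ ℂ Dexp)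

instance : FiniteDimensional ℂ W6 := Module.Finite.equiv eW6.symm

lemma finrank_W6 : Module.finrank ℂ W6 = 16 := by
  rw [eW6.finrank_eq, Module.finrank_fintype_fun_eq_card, cardDexp]

/-! ### Auxiliary: membership of some monomials in `W6` -/

lemma hXpow (i : Fin 3) (k : ℕ) : IsWeightedHomogeneous w112 ((X i : P3) ^ k) (k * w112 i) := by
  rw [X_pow_eq_monomial]
  exact isWeightedHomogeneous_monomial w112 (Finsupp.single i k) (1:ℂ)
    (by simp [Finsupp.weight_apply, Finsupp.sum_single_index, mul_comm])

lemma mem1 : (X 0 : P3) ^ 6 ∈ W6 := by simpa [W6, mem_weightedHomogeneousSubmodule, w112] using hXpow 0 6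
lemma mem2 : (X 0 : P3) ^ 5 * X 1 ∈ W6 := by
  simpa [W6, mem_weightedHomogeneousSubmodule, w112] using (hXpow 0 5).mul (by simpa [w112] using hXpow 1 1)
lemma mem3 : (X 0 : P3) ^ 4 * X 2 ∈ W6 := by
  simpa [W6, mem_weightedHomogeneousSubmodule, w112] using (hXpow 0 4).mul (by simpa [w112] using hXpow 2 1)
lemma mem1' : (X 1 : P3) ^ 6 ∈ W6 := by simpa [W6, mem_weightedHomogeneousSubmodule, w112] using hXpow 1 6
lemma mem2' : (X 0 : P3) * X 1 ^ 5 ∈ W6 := by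
  simpa [W6, mem_weightedHomogeneousSubmodule, w112] using (by simpa [w112] using hXpow 0 1 :
    IsWeightedHomogeneous w112 ((X 0 : P3)) 1).mul (hXpow 1 5)
lemma mem3' : (X 1 : P3) ^ 4 * X 2 ∈ W6 := by
  simpa [W6, mem_weightedHomogeneousSubmodule, w112] using (hXpow 1 4).mul (by simpa [w112] using hXpow 2 1)

/-! ### Auxiliary: the evaluation functionals -/

def φ (p : Fin 3 → ℂ) (i : Fin 3) : P3 →ₗ[ℂ] ℂ :=
  (aeval p).toLinearMap.comp (pderiv i).toLinearMap

lemma φ_apply (p : Fin 3 → ℂ) (i : Fin 3) (f : P3) : φ p i f = eval p (pderiv i f) := rfl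

lemma surj_x (x₀ y₀ z₀ : ℂ) (v : Fin 3 → ℂ) (hx : x₀ ≠ 0) :
    ∃ f ∈ W6, ∀ i : Fin 3, eval ![x₀, y₀, z₀] (pderiv i f) = v i := by
  set c := v 2 / x₀ ^ 4 with hcc
  set b := v 1 / x₀ ^ 5 with hbb
  set a := (v 0 - 5 * b * x₀ ^ 4 * y₀ - 4 * c * x₀ ^ 3 * z₀) / (6 * x₀ ^ 5) with haa
  refine ⟨a • (X 0 : P3) ^ 6 + b • ((X 0 : P3) ^ 5 * X 1) + c • ((X 0 : P3) ^ 4 * X 2),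
    W6.add_mem (W6.add_mem (W6.smul_mem a mem1) (W6.smul_mem b mem2)) (W6.smul_mem c mem3), ?_⟩
  intro i
  fin_cases i
  · simp [pderiv_mul, pderiv_pow, pderiv_X, Pi.single_apply, haa, hbb, hcc]
    rw [div_mul_cancel₀ _ (mul_ne_zero (by norm_num : (6:ℂ) ≠ 0) (pow_ne_zero 5 hx))]
    ring
  · simp [pderiv_mul, pderiv_pow, pderiv_X, Pi.single_apply, hbb]
    exact div_mul_cancel₀ _ (pow_ne_zero 5 hx)
  · simp [pderiv_mul, pderiv_pow, pderiv_X, Pi.single_apply, hcc]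
    exact div_mul_cancel₀ _ (pow_ne_zero 4 hx)

lemma surj_y (x₀ y₀ z₀ : ℂ) (v : Fin 3 → ℂ) (hy : y₀ ≠ 0) :
    ∃ f ∈ W6, ∀ i : Fin 3, eval ![x₀, y₀, z₀] (pderiv i f) = v i := by
  set c := v 2 / y₀ ^ 4 with hcc
  set b := v 0 / y₀ ^ 5 with hbb
  set a := (v 1 - 5 * b * y₀ ^ 4 * x₀ - 4 * c * y₀ ^ 3 * z₀) / (6 * y₀ ^ 5) with haa
  refine ⟨a • (X 1 : P3) ^ 6 + b • ((X 0 : P3) * X 1 ^ 5) + c • ((X 1 : P3) ^ 4 * X 2),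
    W6.add_mem (W6.add_mem (W6.smul_mem a mem1') (W6.smul_mem b mem2')) (W6.smul_mem c mem3'), ?_⟩
  intro i
  fin_cases i
  · simp [pderiv_mul, pderiv_pow, pderiv_X, Pi.single_apply, hbb]
    exact div_mul_cancel₀ _ (pow_ne_zero 5 hy)
  · simp [pderiv_mul, pderiv_pow, pderiv_X, Pi.single_apply, haa, hbb, hcc]
    rw [div_mul_cancel₀ _ (mul_ne_zero (by norm_num : (6:ℂ) ≠ 0) (pow_ne_zero 5 hy))]
    ring
  · simp [pderiv_mul, pderiv_pow, pderiv_X, Pi.single_apply, hcc]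
    exact div_mul_cancel₀ _ (pow_ne_zero 4 hy)

set_option synthInstance.maxHeartbeats 1000000 in
theorem cone_dim_sixteen_and_singular_at_point_codim_three :
    Module.finrank ℂ W6 = 16 ∧
    ∀ x₀ y₀ z₀ : ℂ, ¬(x₀ = 0 ∧ y₀ = 0) →
      ∃ S : Submodule ℂ P3,
        (S : Set P3) = {f : P3 | f ∈ W6 ∧ SingAt f ![x₀, y₀, z₀]} ∧
        Module.finrank ℂ S = 13 := by
  refine ⟨finrank_W6, fun x₀ y₀ z₀ h => ?_⟩
  have p : Fin 3 → ℂ := ![x₀, y₀, z₀]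
  set K : Submodule ℂ P3 := ⨅ i : Fin 3, LinearMap.ker (φ ![x₀, y₀, z₀] i) with hK
  refine ⟨W6 ⊓ K, ?_, ?_⟩
  · ext f
    simp [hK, Submodule.mem_inf, Submodule.mem_iInf, LinearMap.mem_ker, φ_apply, SingAt]
  · set L : W6 →ₗ[ℂ] (Fin 3 → ℂ) :=
      LinearMap.pi (fun i => (φ ![x₀, y₀, z₀] i).comp W6.subtype) with hL
    have hLapp : ∀ (g : W6) (i : Fin 3), L g i = eval ![x₀, y₀, z₀] (pderiv i (g : P3)) :=
      fun g i => rfl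
    have hker : LinearMap.ker L = Submodule.comap W6.subtype (W6 ⊓ K) := by
      ext x
      simp only [LinearMap.mem_ker, Submodule.mem_comap, Submodule.mem_inf, hK,
        Submodule.mem_iInf, LinearMap.mem_ker, funext_iff]
      constructor
      · intro hv
        exact ⟨x.2, fun i => by simpa [hLapp, φ_apply] using hv i⟩
      · intro hv i
        simpa [hLapp, φ_apply] using hv.2 i
    have hsurj : Function.Surjective L := by
      intro v
      have : ∃ f ∈ W6, ∀ i : Fin 3, eval ![x₀, y₀, z₀] (pderiv i f) = v i := by
        rcases not_and_or.1 h with hx | hy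
        · exact surj_x x₀ y₀ z₀ v hx
        · exact surj_y x₀ y₀ z₀ v hy
      obtain ⟨f, hf, hfv⟩ := this
      exact ⟨⟨f, hf⟩, funext fun i => by rw [hLapp]; exact hfv i⟩
    have hrange : LinearMap.range L = ⊤ := LinearMap.range_eq_top.2 hsurj
    have hrk := LinearMap.finrank_range_add_finrank_ker L
    rw [hrange, finrank_top, Module.finrank_fintype_fun_eq_card, Fintype.card_fin,
      finrank_W6] at hrk
    have e : (Submodule.comap W6.subtype (W6 ⊓ K)) ≃ₗ[ℂ] (W6 ⊓ K : Submodule ℂ P3) :=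
      Submodule.comapSubtypeEquivOfLe inf_le_left
    have hfin : Module.finrank ℂ (W6 ⊓ K : Submodule ℂ P3)
        = Module.finrank ℂ (LinearMap.ker L) := by
      rw [hker]; exact e.symm.finrank_eq
    omega

end
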